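/- arXiv:1611.01824 — 3 statements merged into one kernel-verified Lean document; each statement's English description precedes it below -/
import Mathlib

section
/- Let G be a finite undirected graph on N vertices with M edges that is a tree (connected and acyclic), with an arbitrary orientation, edges numbered k = 1,…,M with endpoints ℓ_k (head) and m_k (tail), and oriented incidence matrix D ∈ ℝ^{N×M}. Let p₁,…,p_N ∈ ℝ³ be vectors such that p_{ℓ_k} ≠ p_{m_k} for every edge k. Define the block matrix F_p ∈ ℝ^{M×3M} whose k-th row has the row vector 2·(p_{ℓ_k} − p_{m_k})ᵀ in its k-th 3-column block and zeros elsewhere; define F̄_p = diag(F_p, I_{3M}) ∈ ℝ^{4M×6M} and D̄ = diag(D ⊗ I₃, D ⊗ I₃) ∈ ℝ^{6N×6M}, where ⊗ denotes the Kronecker product. Then the matrix P = F̄_p · D̄ᵀ · D̄ · F̄_pᵀ ∈ ℝ^{4M×4M} is positive definite. -/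
open Matrix
open Kronecker

private lemma aux_posDef {m n : Type*} [Fintype m] [Fintype n] (B : Matrix n m ℝ)
    (h : ∀ x : m → ℝ, B *ᵥ x = 0 → x = 0) : (Bᵀ * B).PosDef := by
  refine Matrix.posDef_iff_dotProduct_mulVec.mpr ⟨?_, fun x hx => ?_⟩
  · rw [Matrix.IsHermitian, conjTranspose_eq_transpose_of_trivial, Matrix.transpose_mul,
      Matrix.transpose_transpose]
  · have key : star x ⬝ᵥ ((Bᵀ * B) *ᵥ x) = (B *ᵥ x) ⬝ᵥ (B *ᵥ x) := by
      rw [star_trivial, ← Matrix.mulVec_mulVec, Matrix.dotProduct_mulVec,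
        Matrix.vecMul_transpose]
    rw [key]
    have hv : B *ᵥ x ≠ 0 := fun h0 => hx (h x h0)
    have h1 : (B *ᵥ x) ⬝ᵥ (B *ᵥ x) ≠ 0 :=
      fun hc => hv (dotProduct_self_eq_zero.mp hc)
    have h2 : 0 ≤ (B *ᵥ x) ⬝ᵥ (B *ᵥ x) :=
      Finset.sum_nonneg fun i _ => mul_self_nonneg _
    exact lt_of_le_of_ne h2 (Ne.symm h1)

/-- For a tree `G` with oriented incidence matrix `D`, and points
`p i ∈ ℝ³` with `p (head k) ≠ p (tail k)` for every edge `k`, the matrix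
`P = F̄ₚ D̄ᵀ D̄ F̄ₚᵀ` is positive definite, where `Fₚ` is the block matrix whose `k`-th
row carries `2 (p (head k) - p (tail k))ᵀ` in its `k`-th 3-column block,
`F̄ₚ = diag(Fₚ, I₃ₘ)` and `D̄ = diag(D ⊗ I₃, D ⊗ I₃)`. -/
theorem stmt_1 {N M : ℕ} (G : SimpleGraph (Fin N)) (hG : G.IsTree)
    (head tail : Fin M → Fin N)
    (hadj : ∀ k, G.Adj (head k) (tail k))
    (hinj : Function.Injective (fun k : Fin M => s(head k, tail k)))
    (hsurj : ∀ e ∈ G.edgeSet, ∃ k : Fin M, s(head k, tail k) = e)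
    (D : Matrix (Fin N) (Fin M) ℝ)
    (hD : ∀ i k, D i k =
      if i = head k then 1 else if i = tail k then -1 else 0)
    (p : Fin N → Fin 3 → ℝ)
    (hp : ∀ k, p (head k) ≠ p (tail k))
    (Fp : Matrix (Fin M) (Fin M × Fin 3) ℝ)
    (hFp : ∀ k j c, Fp k (j, c) =
      if j = k then 2 * (p (head k) c - p (tail k) c) else 0)
    (Fbar : Matrix (Fin M ⊕ (Fin M × Fin 3)) ((Fin M × Fin 3) ⊕ (Fin M × Fin 3)) ℝ)
    (hFbar : Fbar = Matrix.fromBlocks Fp 0 0 (1 : Matrix (Fin M × Fin 3) (Fin M × Fin 3) ℝ))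
    (Dbar : Matrix ((Fin N × Fin 3) ⊕ (Fin N × Fin 3)) ((Fin M × Fin 3) ⊕ (Fin M × Fin 3)) ℝ)
    (hDbar : Dbar = Matrix.fromBlocks
      (D ⊗ₖ (1 : Matrix (Fin 3) (Fin 3) ℝ)) 0 0
      (D ⊗ₖ (1 : Matrix (Fin 3) (Fin 3) ℝ))) :
    (Fbar * Dbar.transpose * Dbar * Fbar.transpose).PosDef := by
  classical
  have hne : ∀ k, head k ≠ tail k := fun k => (hadj k).ne
  -- formula for `Dᵀ *ᵥ v`
  have hDT : ∀ (v : Fin N → ℝ) (k : Fin M), (Dᵀ *ᵥ v) k = v (head k) - v (tail k) := by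
    intro v k
    have hterm : ∀ i, Dᵀ k i * v i =
        (if i = head k then v i else 0) + (if i = tail k then -v i else 0) := by
      intro i
      rw [Matrix.transpose_apply, hD]
      rcases eq_or_ne i (head k) with h1 | h1
      · subst h1; simp [hne k]
      · rcases eq_or_ne i (tail k) with h2 | h2
        · subst h2; simp [h1]
        · simp [h1, h2]
    show (∑ i, Dᵀ k i * v i) = _
    rw [Finset.sum_congr rfl (fun i _ => hterm i), Finset.sum_add_distrib]
    simp [sub_eq_add_neg]
  -- vectors in the kernel of `Dᵀ` are constant
  have hconst : ∀ v : Fin N → ℝ, Dᵀ *ᵥ v = 0 → ∀ i j, v i = v j := by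
    intro v hv
    have hadjv : ∀ ⦃u w : Fin N⦄, G.Adj u w → v u = v w := by
      intro u w huw
      obtain ⟨k, hk⟩ := hsurj s(u, w) (G.mem_edgeSet.mpr huw)
      have h0 : v (head k) - v (tail k) = 0 := by
        rw [← hDT v k, hv]; rfl
      have h0' : v (head k) = v (tail k) := by linarith
      rcases Sym2.eq_iff.mp hk with ⟨h1, h2⟩ | ⟨h1, h2⟩ <;> subst h1 <;> subst h2
      · exact h0'
      · exact h0'.symm
    have hwalk : ∀ {a b : Fin N} (w : G.Walk a b), v a = v b := by
      intro a b w
      induction w with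
      | nil => rfl
      | cons h _ ih => exact (hadjv h).trans ih
    intro i j
    obtain ⟨w⟩ := hG.isConnected.preconnected i j
    exact hwalk w
  obtain ⟨i0⟩ := hG.isConnected.nonempty
  have hN : 0 < N := i0.pos
  -- number of edges
  have hcard : M + 1 = N := by
    have hbij : Function.Bijective
        (fun k : Fin M => (⟨s(head k, tail k), G.mem_edgeSet.mpr (hadj k)⟩ : G.edgeSet)) := by
      constructor
      · intro a b hab
        exact hinj (congrArg Subtype.val hab)
      · rintro ⟨e, he⟩
        obtain ⟨k, hk⟩ := hsurj e he
        exact ⟨k, Subtype.ext hk⟩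
    have h1 : Fintype.card (Fin M) = Fintype.card G.edgeSet :=
      Fintype.card_of_bijective hbij
    have h2 := hG.card_edgeFinset
    rw [SimpleGraph.edgeFinset_card] at h2
    rw [Fintype.card_fin] at h1
    rw [← h1, Fintype.card_fin] at h2
    omega
  -- kernel of `Dᵀ` is the span of the constant vector
  have hone_ne : (fun _ => (1 : ℝ) : Fin N → ℝ) ≠ 0 := by
    intro h
    have := congrFun h i0
    norm_num at this
  have hkerT : LinearMap.ker (Matrix.mulVecLin Dᵀ) =
      Submodule.span ℝ {(fun _ => 1 : Fin N → ℝ)} := by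
    apply le_antisymm
    · intro v hv
      rw [LinearMap.mem_ker] at hv
      have hc := hconst v hv
      rw [Submodule.mem_span_singleton]
      exact ⟨v i0, funext fun j => by simpa using (hc j i0).symm⟩
    · rw [Submodule.span_le, Set.singleton_subset_iff]
      simp only [SetLike.mem_coe, LinearMap.mem_ker]
      show Dᵀ *ᵥ (fun _ => (1 : ℝ)) = 0
      funext k
      rw [hDT]
      simp
  have hrankT : Dᵀ.rank + 1 = N := by
    have h1 := LinearMap.finrank_range_add_finrank_ker (Matrix.mulVecLin Dᵀ)
    rw [hkerT, finrank_span_singleton hone_ne, Module.finrank_pi, Fintype.card_fin] at h1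
    exact h1
  have hrankD : D.rank = M := by
    have h2 := Matrix.rank_transpose D
    omega
  -- `D` has trivial kernel
  have hkerD : ∀ x : Fin M → ℝ, D *ᵥ x = 0 → x = 0 := by
    have h1 := LinearMap.finrank_range_add_finrank_ker (Matrix.mulVecLin D)
    rw [← Matrix.rank, hrankD, Module.finrank_pi, Fintype.card_fin] at h1
    have h2 : Module.finrank ℝ (LinearMap.ker (Matrix.mulVecLin D)) = 0 := by omega
    have h3 : LinearMap.ker (Matrix.mulVecLin D) = ⊥ := Submodule.finrank_eq_zero.mp h2
    intro x hx
    have hm : x ∈ LinearMap.ker (Matrix.mulVecLin D) := by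
      rwa [LinearMap.mem_ker, Matrix.mulVecLin_apply]
    rw [h3, Submodule.mem_bot] at hm
    exact hm
  -- `D ⊗ I₃` has trivial kernel
  have hkerK : ∀ y : Fin M × Fin 3 → ℝ,
      (D ⊗ₖ (1 : Matrix (Fin 3) (Fin 3) ℝ)) *ᵥ y = 0 → y = 0 := by
    intro y hy
    funext kc
    obtain ⟨k, c⟩ := kc
    have hDc : D *ᵥ (fun k => y (k, c)) = 0 := by
      funext i
      have h0 : ((D ⊗ₖ (1 : Matrix (Fin 3) (Fin 3) ℝ)) *ᵥ y) (i, c) = 0 := by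
        rw [hy]; rfl
      rw [Pi.zero_apply, ← h0]
      simp [Matrix.mulVec, dotProduct, Fintype.sum_prod_type,
        Matrix.kroneckerMap_apply, Matrix.one_apply, ite_mul, mul_ite,
        Finset.sum_ite_eq, Finset.sum_ite_eq']
    exact congrFun (hkerD _ hDc) k
  -- rewrite `P` as `Bᵀ * B`
  have hBt : Fbar * Dbarᵀ = (Dbar * Fbarᵀ)ᵀ := by
    rw [Matrix.transpose_mul, Matrix.transpose_transpose]
  rw [Matrix.mul_assoc, hBt]
  apply aux_posDef
  intro x hx
  rw [hFbar, hDbar] at hx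
  set x1 : Fin M → ℝ := fun k => x (Sum.inl k) with hx1def
  set x2 : Fin M × Fin 3 → ℝ := fun j => x (Sum.inr j) with hx2def
  have hxe : x = Sum.elim x1 x2 := by
    funext s; cases s <;> rfl
  rw [hxe, ← Matrix.mulVec_mulVec, Matrix.fromBlocks_transpose, Matrix.transpose_zero,
    Matrix.transpose_zero, Matrix.transpose_one, Matrix.fromBlocks_mulVec] at hx
  simp only [Sum.elim_comp_inl, Sum.elim_comp_inr, Matrix.zero_mulVec, add_zero, zero_add,
    Matrix.one_mulVec] at hx
  rw [Matrix.fromBlocks_mulVec] at hx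
  simp only [Sum.elim_comp_inl, Sum.elim_comp_inr, Matrix.zero_mulVec, add_zero,
    zero_add, Matrix.one_mulVec] at hx
  have hleft : (D ⊗ₖ (1 : Matrix (Fin 3) (Fin 3) ℝ)) *ᵥ (Fpᵀ *ᵥ x1) = 0 := by
    funext ic
    exact congrFun hx (Sum.inl ic)
  have hright : (D ⊗ₖ (1 : Matrix (Fin 3) (Fin 3) ℝ)) *ᵥ x2 = 0 := by
    funext ic
    exact congrFun hx (Sum.inr ic)
  have hx2 : x2 = 0 := hkerK _ hright
  have hFpx : Fpᵀ *ᵥ x1 = 0 := hkerK _ hleft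
  have hx1 : x1 = 0 := by
    funext j
    by_contra hj
    apply hp j
    funext c
    have hval : (Fpᵀ *ᵥ x1) (j, c) = 2 * (p (head j) c - p (tail j) c) * x1 j := by
      simp [Matrix.mulVec, dotProduct, Matrix.transpose_apply, hFp, ite_mul,
        Finset.sum_ite_eq]
    have h0 : 2 * (p (head j) c - p (tail j) c) * x1 j = 0 := by
      rw [← hval, hFpx]; rfl
    have h1 := (mul_eq_zero.mp h0).resolve_right hj
    linarith
  funext s
  cases s with
  | inl k => exact congrFun hx1 k
  | inr j => exact congrFun hx2 j
end

section
/- Let a, b > 0 and define f : (−a, b) → ℝ by f(ξ) = ln((1 + ξ/a) / (1 − ξ/b)). Then for every ε̄ ≥ 0 and every ξ ∈ (−a, b) with |f(ξ)| ≤ ε̄, it holds that −a < a·b·(e^{−ε̄} − 1)/(b + a·e^{−ε̄}) ≤ ξ ≤ a·b·(e^{ε̄} − 1)/(b + a·e^{ε̄}) < b; that is, ξ remains in a compact subinterval of (−a, b) determined only by ε̄, a, b. -/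
open Real Set

/-- For `a, b > 0` and `f ξ = ln((1 + ξ/a)/(1 − ξ/b))`: whenever
`ε̄ ≥ 0`, any `ξ ∈ (−a, b)` with `|f ξ| ≤ ε̄` satisfies
`−a < ab(e^{−ε̄} − 1)/(b + a e^{−ε̄}) ≤ ξ ≤ ab(e^{ε̄} − 1)/(b + a e^{ε̄}) < b`. -/
theorem stmt_6 (a b : ℝ) (ha : 0 < a) (hb : 0 < b)
    (f : ℝ → ℝ) (hf : ∀ ξ, f ξ = Real.log ((1 + ξ / a) / (1 - ξ / b))) :
    ∀ εbar : ℝ, 0 ≤ εbar → ∀ ξ ∈ Ioo (-a) b, |f ξ| ≤ εbar →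
      -a < a * b * (Real.exp (-εbar) - 1) / (b + a * Real.exp (-εbar)) ∧
      a * b * (Real.exp (-εbar) - 1) / (b + a * Real.exp (-εbar)) ≤ ξ ∧
      ξ ≤ a * b * (Real.exp εbar - 1) / (b + a * Real.exp εbar) ∧
      a * b * (Real.exp εbar - 1) / (b + a * Real.exp εbar) < b := by
  intro ε hε ξ hξ habs
  obtain ⟨hξ1, hξ2⟩ := hξ
  have hp : 0 < 1 + ξ / a := by
    have : -1 < ξ / a := by rw [lt_div_iff₀ ha]; linarith
    linarith
  have hq : 0 < 1 - ξ / b := by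
    have : ξ / b < 1 := by rw [div_lt_one hb]; linarith
    linarith
  have hu : 0 < (1 + ξ / a) / (1 - ξ / b) := div_pos hp hq
  rw [hf, abs_le] at habs
  have hE : 0 < Real.exp ε := Real.exp_pos _
  have he : 0 < Real.exp (-ε) := Real.exp_pos _
  have hdenE : 0 < b + a * Real.exp ε := by positivity
  have hdene : 0 < b + a * Real.exp (-ε) := by positivity
  have hub : (1 + ξ / a) / (1 - ξ / b) ≤ Real.exp ε := by
    calc (1 + ξ / a) / (1 - ξ / b) = Real.exp (Real.log ((1 + ξ / a) / (1 - ξ / b))) :=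
          (Real.exp_log hu).symm
      _ ≤ Real.exp ε := Real.exp_le_exp.2 habs.2
  have hlb : Real.exp (-ε) ≤ (1 + ξ / a) / (1 - ξ / b) := by
    calc Real.exp (-ε) ≤ Real.exp (Real.log ((1 + ξ / a) / (1 - ξ / b))) :=
          Real.exp_le_exp.2 habs.1
      _ = (1 + ξ / a) / (1 - ξ / b) := Real.exp_log hu
  have key : (1 + ξ / a) / (1 - ξ / b) = (b * (a + ξ)) / (a * (b - ξ)) := by
    rw [div_eq_div_iff hq.ne' (by nlinarith : a * (b - ξ) ≠ 0)]
    field_simp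
  rw [key] at hub hlb
  have hden : 0 < a * (b - ξ) := by nlinarith
  have hub' : b * (a + ξ) ≤ Real.exp ε * (a * (b - ξ)) := (div_le_iff₀ hden).1 hub
  have hlb' : Real.exp (-ε) * (a * (b - ξ)) ≤ b * (a + ξ) := (le_div_iff₀ hden).1 hlb
  refine ⟨?_, ?_, ?_, ?_⟩
  · rw [lt_div_iff₀ hdene]
    nlinarith [mul_pos (mul_pos ha hb) he, mul_pos (mul_pos ha ha) he]
  · rw [div_le_iff₀ hdene]
    nlinarith
  · rw [le_div_iff₀ hdenE]
    nlinarith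
  · rw [div_lt_iff₀ hdenE]
    nlinarith [mul_pos hb hb, mul_pos (mul_pos ha hb) hE]
end

section
/- Let T ∈ (0, ∞], let c ≥ 0, and let ε : [0, T) → ℝⁿ be a differentiable curve such that for every t ∈ [0, T), if ‖ε(t)‖ > c then the derivative at t of the function s ↦ (1/2)·‖ε(s)‖² is strictly negative. Then ‖ε(t)‖ ≤ max{‖ε(0)‖, c} for all t ∈ [0, T). -/
open Set

/-- Let `T ∈ (0, ∞]`, `c ≥ 0`, and let `ε : [0, T) → ℝⁿ` be a
differentiable curve such that whenever `‖ε t‖ > c`, the derivative of the Lyapunov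
function `V s = (1/2)‖ε s‖²` at `t` (within `[0, T)`) is strictly negative.
Then `‖ε t‖ ≤ max ‖ε 0‖ c` on `[0, T)`. -/
theorem stmt_9 {n : ℕ} (T : EReal) (hT : 0 < T) (c : ℝ) (hc : 0 ≤ c)
    (ε : ℝ → EuclideanSpace ℝ (Fin n))
    (S : Set ℝ) (hS : S = {t : ℝ | 0 ≤ t ∧ (t : EReal) < T})
    (hdiff : DifferentiableOn ℝ ε S)
    (hdec : ∀ t ∈ S, ‖ε t‖ > c →
      derivWithin (fun s => (1 / 2 : ℝ) * ‖ε s‖ ^ 2) S t < 0) :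
    ∀ t ∈ S, ‖ε t‖ ≤ max ‖ε 0‖ c := by
  intro t ht
  by_contra hgt
  push_neg at hgt
  set V : ℝ → ℝ := fun s => (1 / 2 : ℝ) * ‖ε s‖ ^ 2 with hV
  have ht' : 0 ≤ t ∧ (t : EReal) < T := by rwa [hS] at ht
  obtain ⟨ht0, htT⟩ := ht'
  have hmemS : ∀ s : ℝ, 0 ≤ s → s ≤ t → s ∈ S := by
    intro s h0 hle
    rw [hS]
    exact ⟨h0, lt_of_le_of_lt (EReal.coe_le_coe_iff.2 hle) htT⟩
  have h0S : (0 : ℝ) ∈ S := hmemS 0 le_rfl ht0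
  -- differentiability of V
  have hVinner : V = fun s => (1 / 2 : ℝ) * (inner ℝ (ε s) (ε s) : ℝ) := by
    funext s
    rw [hV, real_inner_self_eq_norm_sq]
  have hdiffV : DifferentiableOn ℝ V S := by
    rw [hVinner]
    exact (hdiff.inner ℝ hdiff).const_mul _
  have hcont : ContinuousOn V S := hdiffV.continuousOn
  set K : ℝ := max (V 0) ((1 / 2) * c ^ 2) with hK
  have hε0 : ‖ε 0‖ < ‖ε t‖ := lt_of_le_of_lt (le_max_left _ _) hgt
  have hct : c < ‖ε t‖ := lt_of_le_of_lt (le_max_right _ _) hgt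
  have hVt : K < V t := by
    apply max_lt
    · have := norm_nonneg (ε 0)
      simp only [hV]
      nlinarith
    · simp only [hV]
      nlinarith
  set A : Set ℝ := Icc 0 t ∩ V ⁻¹' Iic K with hA
  have hA0 : (0 : ℝ) ∈ A := ⟨⟨le_rfl, ht0⟩, by simp [mem_preimage, mem_Iic, hK]⟩
  have hAbd : BddAbove A := BddAbove.mono inter_subset_left bddAbove_Icc
  have hAclosed : IsClosed A :=
    ContinuousOn.preimage_isClosed_of_isClosed
      (hcont.mono fun s hs => hmemS s hs.1 hs.2) isClosed_Icc isClosed_Iic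
  set t₀ : ℝ := sSup A with ht₀
  have ht₀A : t₀ ∈ A := hAclosed.csSup_mem ⟨0, hA0⟩ hAbd
  obtain ⟨⟨h0t₀, ht₀t⟩, hVt₀⟩ := ht₀A
  have ht₀lt : t₀ < t := by
    rcases lt_or_eq_of_le ht₀t with h | h
    · exact h
    · exfalso; rw [h] at hVt₀; exact absurd hVt₀ (not_le.2 hVt)
  have hmid : ∀ s ∈ Ioc t₀ t, K < V s := by
    intro s hs
    by_contra hle
    push_neg at hle
    have hsA : s ∈ A := ⟨⟨le_trans h0t₀ hs.1.le, hs.2⟩, hle⟩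
    exact absurd (le_csSup hAbd hsA) (not_le.2 hs.1)
  have hanti : StrictAntiOn V (Icc t₀ t) := by
    apply strictAntiOn_of_deriv_neg (convex_Icc _ _)
    · exact hcont.mono fun s hs => hmemS s (le_trans h0t₀ hs.1) (hs.2)
    · intro x hx
      rw [interior_Icc] at hx
      have hxS : x ∈ S := hmemS x (le_trans h0t₀ hx.1.le) hx.2.le
      have hKx : K < V x := hmid x ⟨hx.1, hx.2.le⟩
      have hcx : c < ‖ε x‖ := by
        have h1 : (1 / 2 : ℝ) * c ^ 2 ≤ K := le_max_right _ _
        have h2 : (1 / 2 : ℝ) * c ^ 2 < (1 / 2 : ℝ) * ‖ε x‖ ^ 2 := lt_of_le_of_lt h1 hKx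
        nlinarith [norm_nonneg (ε x)]
      have hd := hdec x hxS hcx
      have hnhds : S ∈ nhds x := by
        apply mem_nhds_iff.2
        exact ⟨Ioo 0 t, fun y hy => hmemS y hy.1.le hy.2.le, isOpen_Ioo,
          ⟨lt_of_le_of_lt h0t₀ hx.1, hx.2⟩⟩
      rwa [derivWithin_of_mem_nhds hnhds] at hd
  have hfin : V t < V t₀ :=
    hanti (left_mem_Icc.2 ht₀lt.le) (right_mem_Icc.2 ht₀lt.le) ht₀lt
  have hVt₀le : V t₀ ≤ K := hVt₀
  linarith
end
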